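/- Let G be a word-hyperbolic group with finite generating set A and word metric d on the Cayley graph X = Γ(G,A). Let H, F ≤ G be quasiconvex subgroups such that H ∩ F = {1}. Then (H, F)₁ := sup{(h, f)₁ : h ∈ H, f ∈ F} < ∞, where (h,f)₁ is the Gromov product with respect to the identity element 1. -/
import Mathlib

variable {G : Type*} [Group G]

/-- The set of lengths of words in the alphabet `A ∪ A⁻¹` representing `g`. -/
def wordLengthSet (A : Finset G) (g : G) : Set ℕ :=
  {n | ∃ l : List G, l.length = n ∧ (∀ x ∈ l, x ∈ A ∨ x⁻¹ ∈ A) ∧ l.prod = g}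

/-- The word length of `g` with respect to the generating set `A`. -/
noncomputable def wl (A : Finset G) (g : G) : ℕ :=
  sInf (wordLengthSet A g)

/-- The word metric on `G` (distance between vertices of the Cayley graph `Γ(G,A)`). -/
noncomputable def wdist (A : Finset G) (g h : G) : ℕ :=
  wl A (g⁻¹ * h)

/-- A (discrete) geodesic from `x` to `y` in the Cayley graph `Γ(G,A)`. -/
def IsGeodesic (A : Finset G) (γ : ℕ → G) (x y : G) : Prop :=
  γ 0 = x ∧ γ (wdist A x y) = y ∧
    ∀ i j : ℕ, i ≤ wdist A x y → j ≤ wdist A x y →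
      wdist A (γ i) (γ j) = Nat.dist i j

/-- The Gromov product `(x,y)_z` in the Cayley graph `Γ(G,A)`. -/
noncomputable def gp (A : Finset G) (z x y : G) : ℝ :=
  ((wdist A z x : ℝ) + (wdist A z y : ℝ) - (wdist A x y : ℝ)) / 2

/-- All geodesic triangles in `Γ(G,A)` are `δ`-thin: each side is contained in the
closed `δ`-neighbourhood of the union of the other two sides. -/
def IsThin (A : Finset G) (δ : ℝ) : Prop :=
  ∀ x y z : G, ∀ γ₁ γ₂ γ₃ : ℕ → G,
    IsGeodesic A γ₁ x y → IsGeodesic A γ₂ y z → IsGeodesic A γ₃ x z →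
    ∀ i, i ≤ wdist A x y →
      (∃ j, j ≤ wdist A y z ∧ (wdist A (γ₁ i) (γ₂ j) : ℝ) ≤ δ) ∨
      (∃ j, j ≤ wdist A x z ∧ (wdist A (γ₁ i) (γ₃ j) : ℝ) ≤ δ)

/-- All geodesic triangles in `Γ(G,A)` are `δ`-trim: points on two sides of a triangle
which are equidistant from the common vertex, up to the Gromov product of the two other
vertices at that vertex, are `δ`-close. -/
def TrimCayley (A : Finset G) (δ : ℝ) : Prop :=
  ∀ x y z : G, ∀ γ₁ γ₂ : ℕ → G, IsGeodesic A γ₁ z x → IsGeodesic A γ₂ z y →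
    ∀ i : ℕ, (i : ℝ) ≤ gp A z x y → (wdist A (γ₁ i) (γ₂ i) : ℝ) ≤ δ

/-- `G` is word-hyperbolic: it is finitely generated and for every finite generating
set `A` there is `δ ≥ 0` such that all geodesic triangles in `Γ(G,A)` are `δ`-thin. -/
def WordHyperbolic (G : Type*) [Group G] : Prop :=
  (∃ A : Finset G, Subgroup.closure (A : Set G) = ⊤) ∧
    ∀ A : Finset G, Subgroup.closure (A : Set G) = ⊤ →
      ∃ δ : ℝ, 0 ≤ δ ∧ IsThin A δ

/-- `G` is virtually cyclic (elementary). -/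
def VirtuallyCyclic (G : Type*) [Group G] : Prop :=
  ∃ H : Subgroup G, IsCyclic H ∧ H.FiniteIndex

/-- `H` is a quasiconvex subgroup of `G`: for every finite generating set `A` there is
`ε ≥ 0` such that every geodesic of `Γ(G,A)` with both endpoints in `H` stays in the
`ε`-neighbourhood of `H`. -/
def QCSubgroup (H : Subgroup G) : Prop :=
  ∀ A : Finset G, Subgroup.closure (A : Set G) = ⊤ →
    ∃ ε : ℝ, 0 ≤ ε ∧ ∀ h₁ h₂ : G, h₁ ∈ H → h₂ ∈ H →
      ∀ γ : ℕ → G, IsGeodesic A γ h₁ h₂ →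
        ∀ i, i ≤ wdist A h₁ h₂ → ∃ h ∈ H, (wdist A (γ i) h : ℝ) ≤ ε

/-- `F` is conjugacy separated from `H` in `G`: `g⁻¹Hg ∩ F = 1` for every `g ∈ G`. -/
def ConjSeparated (H F : Subgroup G) : Prop :=
  ∀ g x : G, x ∈ F → g * x * g⁻¹ ∈ H → x = 1

section Basics
variable (A : Finset G)

lemma wls_nonempty (hA : Subgroup.closure (A : Set G) = ⊤) (g : G) :
    (wordLengthSet A g).Nonempty := by
  have hg : g ∈ (Subgroup.closure (A : Set G)).toSubmonoid := by
    rw [hA]; trivial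
  rw [Subgroup.closure_toSubmonoid] at hg
  obtain ⟨l, hl, hp⟩ := Submonoid.exists_list_of_mem_closure hg
  refine ⟨l.length, l, rfl, fun x hx => ?_, hp⟩
  rcases hl x hx with h | h
  · exact Or.inl h
  · exact Or.inr (Set.mem_inv.mp h)

lemma wl_le {g : G} {l : List G} (h1 : ∀ x ∈ l, x ∈ A ∨ x⁻¹ ∈ A) (h2 : l.prod = g) :
    wl A g ≤ l.length :=
  Nat.sInf_le ⟨l, rfl, h1, h2⟩

lemma exists_min_list (hA : Subgroup.closure (A : Set G) = ⊤) (g : G) :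
    ∃ l : List G, l.length = wl A g ∧ (∀ x ∈ l, x ∈ A ∨ x⁻¹ ∈ A) ∧ l.prod = g :=
  Nat.sInf_mem (wls_nonempty A hA g)

lemma wl_one : wl A (1 : G) = 0 :=
  Nat.le_zero.mp (wl_le A (l := []) (by simp) (by simp))

lemma wl_mul (hA : Subgroup.closure (A : Set G) = ⊤) (g h : G) :
    wl A (g * h) ≤ wl A g + wl A h := by
  obtain ⟨l₁, hl₁, hv₁, hp₁⟩ := exists_min_list A hA g
  obtain ⟨l₂, hl₂, hv₂, hp₂⟩ := exists_min_list A hA h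
  have := wl_le A (g := g * h) (l := l₁ ++ l₂) ?_ (by simp [hp₁, hp₂])
  · simpa [hl₁, hl₂] using this
  · intro x hx
    rcases List.mem_append.mp hx with hx | hx
    · exact hv₁ x hx
    · exact hv₂ x hx

lemma wl_inv_le (hA : Subgroup.closure (A : Set G) = ⊤) (g : G) :
    wl A g⁻¹ ≤ wl A g := by
  obtain ⟨l, hl, hv, hp⟩ := exists_min_list A hA g
  have := wl_le A (g := g⁻¹) (l := (l.map fun x => x⁻¹).reverse) ?_ ?_
  · simpa [hl] using this
  · intro x hx
    simp only [List.mem_reverse, List.mem_map] at hx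
    obtain ⟨y, hy, rfl⟩ := hx
    rcases hv y hy with h | h
    · exact Or.inr (by simpa using h)
    · exact Or.inl h
  · rw [← List.prod_inv_reverse, hp]

lemma wl_inv (hA : Subgroup.closure (A : Set G) = ⊤) (g : G) : wl A g⁻¹ = wl A g :=
  le_antisymm (wl_inv_le A hA g) (by simpa using wl_inv_le A hA g⁻¹)

lemma wl_eq_zero (hA : Subgroup.closure (A : Set G) = ⊤) {g : G} (h : wl A g = 0) : g = 1 := by
  obtain ⟨l, hl, _, hp⟩ := exists_min_list A hA g
  rw [h, List.length_eq_zero_iff] at hl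
  rw [← hp, hl, List.prod_nil]

lemma wdist_symm (hA : Subgroup.closure (A : Set G) = ⊤) (g h : G) :
    wdist A g h = wdist A h g := by
  unfold wdist
  rw [← wl_inv A hA (g⁻¹ * h)]; simp [mul_comm]

lemma wdist_triangle (hA : Subgroup.closure (A : Set G) = ⊤) (x y z : G) :
    wdist A x z ≤ wdist A x y + wdist A y z := by
  unfold wdist
  have : x⁻¹ * z = (x⁻¹ * y) * (y⁻¹ * z) := by group
  rw [this]
  exact wl_mul A hA _ _

lemma exists_geodesic (hA : Subgroup.closure (A : Set G) = ⊤) (x y : G) :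
    ∃ γ : ℕ → G, IsGeodesic A γ x y := by
  obtain ⟨l, hl, hv, hp⟩ := exists_min_list A hA (x⁻¹ * y)
  have hn : l.length = wdist A x y := hl
  refine ⟨fun i => x * (l.take i).prod, by simp, ?_, ?_⟩
  · show x * (l.take (wdist A x y)).prod = y
    rw [← hn, List.take_length, hp, mul_inv_cancel_left]
  · have key : ∀ i j : ℕ, i ≤ j → j ≤ wdist A x y →
        wdist A (x * (l.take i).prod) (x * (l.take j).prod) = j - i := by
      intro i j hij hj
      have htake : l.take j = l.take i ++ ((l.drop i).take (j - i)) := by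
        rw [← List.take_add]
        congr 1
        omega
      have hmid : (x * (l.take i).prod)⁻¹ * (x * (l.take j).prod)
          = ((l.drop i).take (j - i)).prod := by
        rw [htake, List.prod_append]; group
      have hle : wdist A (x * (l.take i).prod) (x * (l.take j).prod) ≤ j - i := by
        unfold wdist
        rw [hmid]
        have := wl_le A (l := (l.drop i).take (j - i))
          (fun z hz => hv z (List.drop_subset _ _ (List.take_subset _ _ hz))) rfl
        refine this.trans ?_
        simp only [List.length_take, List.length_drop]
        omega
      have h1 : wdist A x (x * (l.take i).prod) ≤ i := by
        unfold wdist
        rw [inv_mul_cancel_left]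
        refine (wl_le A (fun z hz => hv z (List.take_subset _ _ hz)) rfl).trans ?_
        simp [hl]
      have h2 : wdist A (x * (l.take j).prod) y ≤ l.length - j := by
        unfold wdist
        have h0 : (l.take j).prod * (l.drop j).prod = x⁻¹ * y := by
          rw [← List.prod_append, List.take_append_drop, hp]
        have : (x * (l.take j).prod)⁻¹ * y = (l.drop j).prod := by
          have h1 : (l.drop j).prod = (l.take j).prod⁻¹ * (x⁻¹ * y) := by
            rw [← h0]; group
          rw [h1]; group
        rw [this]
        refine (wl_le A (fun z hz => hv z (List.drop_subset _ _ hz)) rfl).trans ?_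
        simp
      have hge := wdist_triangle A hA x (x * (l.take i).prod) y
      have hge2 := wdist_triangle A hA (x * (l.take i).prod) (x * (l.take j).prod) y
      have hj' : j ≤ l.length := by omega
      omega
    intro i j hi hj
    rcases le_total i j with h | h
    · rw [key i j h hj]; simp [Nat.dist]; omega
    · rw [wdist_symm A hA, key j i h hi]; simp [Nat.dist]; omega

lemma ball_finite (hA : Subgroup.closure (A : Set G) = ⊤) (n : ℕ) :
    {g : G | wl A g ≤ n}.Finite := by
  induction n with
  | zero =>
    refine Set.Finite.subset (Set.finite_singleton 1) fun g hg => ?_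
    simp only [Set.mem_setOf_eq, Nat.le_zero] at hg
    simp [wl_eq_zero A hA hg]
  | succ n ih =>
    have hS : ({x : G | x ∈ A ∨ x⁻¹ ∈ A}).Finite := by
      refine Set.Finite.subset (A.finite_toSet.union (A.finite_toSet.image fun x => x⁻¹))
        fun x hx => ?_
      rcases hx with h | h
      · exact Or.inl h
      · exact Or.inr ⟨x⁻¹, h, by simp⟩
    refine Set.Finite.subset (ih.union ((hS.biUnion fun s _ => ih.image (fun g => g * s))))
      fun g hg => ?_
    simp only [Set.mem_setOf_eq] at hg
    obtain ⟨l, hl, hv, hp⟩ := exists_min_list A hA g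
    rcases List.eq_nil_or_concat l with rfl | ⟨L, b, rfl⟩
    · left
      simp only [Set.mem_setOf_eq]
      simp only [List.length_nil] at hl
      omega
    · right
      simp only [List.concat_eq_append, List.length_append, List.length_singleton] at hl
      refine Set.mem_biUnion (hv b (by simp)) ?_
      refine ⟨L.prod, ?_, by rw [← hp]; simp⟩
      simp only [Set.mem_setOf_eq]
      refine (wl_le A (fun z hz => hv z (by simp [hz])) rfl).trans ?_
      omega

lemma geo_dist_start {γ : ℕ → G} {x y : G} (hγ : IsGeodesic A γ x y) {i : ℕ}
    (hi : i ≤ wdist A x y) : wdist A x (γ i) = i := by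
  have := hγ.2.2 0 i (Nat.zero_le _) hi
  rw [hγ.1] at this
  simpa [Nat.dist] using this

lemma geo_dist_end (hA : Subgroup.closure (A : Set G) = ⊤) {γ : ℕ → G} {x y : G}
    (hγ : IsGeodesic A γ x y) {i : ℕ}
    (hi : i ≤ wdist A x y) : wdist A (γ i) y = wdist A x y - i := by
  have := hγ.2.2 i (wdist A x y) hi le_rfl
  rw [hγ.2.1] at this
  rw [this]
  simp [Nat.dist]
  omega

end Basics

/-- **Proposition 4.5.** Let `G` be a word-hyperbolic group with finite generating set
`A` and word metric `d` on `X = Γ(G,A)`. If `H, F ≤ G` are quasiconvex subgroups with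
`H ∩ F = 1`, then `(H,F)₁ = sup{(h,f)₁ : h ∈ H, f ∈ F} < ∞`. -/
theorem setGromov_subgroups_lt_top
    (hG : WordHyperbolic G) (A : Finset G) (hA : Subgroup.closure (A : Set G) = ⊤)
    (H F : Subgroup G) (hH : QCSubgroup H) (hF : QCSubgroup F)
    (hHF : H ⊓ F = ⊥) :
    (⨆ h ∈ (H : Set G), ⨆ f ∈ (F : Set G), ((gp A 1 h f : ℝ) : EReal)) < ⊤ := by
  obtain ⟨δ, hδ0, hthin⟩ := hG.2 A hA
  obtain ⟨εH, hεH0, hqcH⟩ := hH A hA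
  obtain ⟨εF, hεF0, hqcF⟩ := hF A hA
  set R : ℝ := εH + δ + εF with hR_def
  have hball : {g : G | (wl A g : ℝ) ≤ R}.Finite := by
    refine (ball_finite A hA ⌈R⌉₊).subset fun g hg => ?_
    simp only [Set.mem_setOf_eq] at hg ⊢
    exact_mod_cast hg.trans (Nat.le_ceil R)
  set B := hball.toFinset with hB_def
  set K := B.card with hK_def
  set s : ℕ := 2 * ⌈εH⌉₊ + 1 with hs_def
  set C : ℝ := δ + (K * s : ℕ) with hC_def
  suffices hbd : ∀ h ∈ H, ∀ f ∈ F, gp A 1 h f ≤ C by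
    refine lt_of_le_of_lt ?_ (EReal.coe_lt_top C)
    refine iSup₂_le fun h hh => iSup₂_le fun f hf => ?_
    exact_mod_cast hbd h hh f hf
  intro h hh f hf
  by_contra hcon
  push_neg at hcon
  obtain ⟨γ₁, hγ₁⟩ := exists_geodesic A hA 1 h
  obtain ⟨γ₂, hγ₂⟩ := exists_geodesic A hA h f
  obtain ⟨γ₃, hγ₃⟩ := exists_geodesic A hA 1 f
  have hgp_le : gp A 1 h f ≤ (wdist A 1 h : ℝ) := by
    have := wdist_triangle A hA 1 h f
    have h2 : (wdist A 1 f : ℝ) ≤ (wdist A 1 h : ℝ) + (wdist A h f : ℝ) := by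
      exact_mod_cast this
    unfold gp
    linarith
  have main : ∀ a : Fin (K + 1), ∃ h' f' : G, h' ∈ H ∧ f' ∈ F ∧
      (wl A (h'⁻¹ * f') : ℝ) ≤ R ∧ (wdist A 1 h' : ℝ) ≤ (a : ℕ) * s + εH ∧
      ((a : ℕ) * s : ℝ) ≤ (wdist A 1 h' : ℝ) + εH := by
    intro a
    set i : ℕ := (a : ℕ) * s with hi_def
    have hiK : (i : ℝ) ≤ ((K * s : ℕ) : ℝ) := by
      exact_mod_cast Nat.mul_le_mul_right s (Nat.le_of_lt_succ a.isLt)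
    have higp : (i : ℝ) + δ < gp A 1 h f := by
      have : C < gp A 1 h f := hcon
      rw [hC_def] at this
      linarith
    have hile : i ≤ wdist A 1 h := by
      have : (i : ℝ) ≤ (wdist A 1 h : ℝ) := by linarith
      exact_mod_cast this
    have hd1γ1 : wdist A 1 (γ₁ i) = i := geo_dist_start A hγ₁ hile
    have hi_cast : (i : ℝ) = ((a : ℕ) : ℝ) * (s : ℝ) := by rw [hi_def]; push_cast; ring
    rcases hthin 1 h f γ₁ γ₂ γ₃ hγ₁ hγ₂ hγ₃ i hile with ⟨j, hj, hclose⟩ | ⟨j, hj, hclose⟩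
    · exfalso
      have e1 : wdist A h (γ₂ j) = j := geo_dist_start A hγ₂ hj
      have e2 : wdist A (γ₂ j) f = wdist A h f - j := geo_dist_end A hA hγ₂ hj
      have t1 : wdist A 1 h ≤ wdist A 1 (γ₂ j) + j := by
        have := wdist_triangle A hA 1 (γ₂ j) h
        rw [wdist_symm A hA (γ₂ j) h, e1] at this
        exact this
      have t2 : wdist A 1 f ≤ wdist A 1 (γ₂ j) + (wdist A h f - j) := by
        have := wdist_triangle A hA 1 (γ₂ j) f
        rw [e2] at this
        exact this
      have t3 : wdist A 1 (γ₂ j) ≤ wdist A 1 (γ₁ i) + wdist A (γ₁ i) (γ₂ j) :=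
        wdist_triangle A hA 1 (γ₁ i) (γ₂ j)
      have hcast : gp A 1 h f ≤ (wdist A 1 (γ₂ j) : ℝ) := by
        unfold gp
        have c1 : (wdist A 1 h : ℝ) ≤ (wdist A 1 (γ₂ j) : ℝ) + j := by exact_mod_cast t1
        have c2 : (wdist A 1 f : ℝ) ≤ (wdist A 1 (γ₂ j) : ℝ) + ((wdist A h f : ℕ) - (j : ℕ) : ℕ) := by
          exact_mod_cast t2
        have c3 : (((wdist A h f : ℕ) - (j : ℕ) : ℕ) : ℝ) = (wdist A h f : ℝ) - (j : ℝ) := by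
          rw [Nat.cast_sub hj]
        rw [c3] at c2
        linarith
      have hfin : (wdist A 1 (γ₂ j) : ℝ) ≤ (i : ℝ) + δ := by
        have c3 : (wdist A 1 (γ₂ j) : ℝ) ≤ (wdist A 1 (γ₁ i) : ℝ) + (wdist A (γ₁ i) (γ₂ j) : ℝ) := by
          exact_mod_cast t3
        rw [hd1γ1] at c3
        linarith
      linarith
    · obtain ⟨h', hh', hdh⟩ := hqcH 1 h (one_mem H) hh γ₁ hγ₁ i hile
      obtain ⟨f', hf', hdf⟩ := hqcF 1 f (one_mem F) hf γ₃ hγ₃ j hj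
      refine ⟨h', f', hh', hf', ?_, ?_, ?_⟩
      · have t1 : wdist A h' f' ≤ wdist A h' (γ₁ i) + wdist A (γ₁ i) (γ₃ j) + wdist A (γ₃ j) f' := by
          have a1 := wdist_triangle A hA h' (γ₁ i) f'
          have a2 := wdist_triangle A hA (γ₁ i) (γ₃ j) f'
          omega
        have c1 : (wdist A h' (γ₁ i) : ℝ) ≤ εH := by
          rw [wdist_symm A hA h' (γ₁ i)]; exact hdh
        have : (wdist A h' f' : ℝ) ≤ (wdist A h' (γ₁ i) : ℝ) + (wdist A (γ₁ i) (γ₃ j) : ℝ)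
            + (wdist A (γ₃ j) f' : ℝ) := by exact_mod_cast t1
        show (wdist A h' f' : ℝ) ≤ R
        rw [hR_def]
        linarith
      · have t1 : wdist A 1 h' ≤ wdist A 1 (γ₁ i) + wdist A (γ₁ i) h' :=
          wdist_triangle A hA 1 (γ₁ i) h'
        rw [hd1γ1] at t1
        have : (wdist A 1 h' : ℝ) ≤ (i : ℝ) + (wdist A (γ₁ i) h' : ℝ) := by exact_mod_cast t1
        linarith
      · have t1 : wdist A 1 (γ₁ i) ≤ wdist A 1 h' + wdist A h' (γ₁ i) :=
          wdist_triangle A hA 1 h' (γ₁ i)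
        rw [hd1γ1] at t1
        have c1 : (wdist A h' (γ₁ i) : ℝ) ≤ εH := by
          rw [wdist_symm A hA h' (γ₁ i)]; exact hdh
        have : (i : ℝ) ≤ (wdist A 1 h' : ℝ) + (wdist A h' (γ₁ i) : ℝ) := by exact_mod_cast t1
        linarith
  choose hfun ffun hmemH hmemF hRb hub hlb using main
  have maps : ∀ a : Fin (K + 1), (hfun a)⁻¹ * ffun a ∈ B := fun a => by
    rw [hB_def, Set.Finite.mem_toFinset]
    exact hRb a
  have hninj : ¬ Function.Injective fun a : Fin (K + 1) =>
      (⟨(hfun a)⁻¹ * ffun a, maps a⟩ : {x // x ∈ B}) := by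
    intro hinj
    have := Fintype.card_le_of_injective _ hinj
    simp only [Fintype.card_fin, Fintype.card_coe] at this
    omega
  rw [Function.not_injective_iff] at hninj
  obtain ⟨a, b, heq, hne⟩ := hninj
  have heq' : (hfun a)⁻¹ * ffun a = (hfun b)⁻¹ * ffun b := by
    simpa using heq
  wlog hab : a < b generalizing a b
  · exact this b a heq.symm hne.symm heq'.symm (by omega)
  have hkey : hfun b * (hfun a)⁻¹ = ffun b * (ffun a)⁻¹ := by
    have : hfun b * ((hfun a)⁻¹ * ffun a) * (ffun a)⁻¹
        = hfun b * ((hfun b)⁻¹ * ffun b) * (ffun a)⁻¹ := by rw [heq']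
    calc hfun b * (hfun a)⁻¹ = hfun b * ((hfun a)⁻¹ * ffun a) * (ffun a)⁻¹ := by group
    _ = hfun b * ((hfun b)⁻¹ * ffun b) * (ffun a)⁻¹ := this
    _ = ffun b * (ffun a)⁻¹ := by group
  have hmem : hfun b * (hfun a)⁻¹ ∈ H ⊓ F := by
    rw [Subgroup.mem_inf]
    constructor
    · exact mul_mem (hmemH b) (inv_mem (hmemH a))
    · rw [hkey]; exact mul_mem (hmemF b) (inv_mem (hmemF a))
  rw [hHF, Subgroup.mem_bot] at hmem
  have hab_eq : hfun a = hfun b := by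
    have := mul_inv_eq_one.mp hmem
    exact this.symm
  -- numeric contradiction
  have h1 := hub a
  have h2 := hlb b
  rw [← hab_eq] at h2
  have hceil : εH ≤ (⌈εH⌉₊ : ℝ) := Nat.le_ceil εH
  have hn : ((a : ℕ) + 1) * s ≤ (b : ℕ) * s := Nat.mul_le_mul_right s hab
  have hstep : ((a : ℕ) : ℝ) * (s : ℝ) + (s : ℝ) ≤ ((b : ℕ) : ℝ) * (s : ℝ) := by
    have hn' : (((a : ℕ) : ℝ) + 1) * (s : ℝ) ≤ ((b : ℕ) : ℝ) * (s : ℝ) := by exact_mod_cast hn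
    linarith
  have hs_cast : (s : ℝ) = 2 * (⌈εH⌉₊ : ℝ) + 1 := by
    rw [hs_def]; push_cast; ring
  linarith
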